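/- Let A be a unital C*-algebra, let π : A → B be a surjective unital *-homomorphism onto a unital C*-algebra B, and let J = ker(π), a closed two-sided ideal of A regarded as a C*-algebra. Let k, l ≥ 1. If Gen_k(J̃)_sa is dense in J̃^k_sa (where J̃ is the minimal unitization of J) and Gen_l(B)_sa is dense in B^l_sa, then Gen_{k+l}(A)_sa is dense in A^{k+l}_sa. In other words, gr(A) ≤ gr(J) + gr(A/J) + 1 for every closed two-sided ideal J of A. -/

import Mathlib

open scoped CStarAlgebra

/-- The entries of the tuple `a` generate `A` as a C*-algebra: the smallest closed
`*`-subalgebra of `A` containing them is `A` itself. -/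
def Generates {A : Type*} [NonUnitalCStarAlgebra A] {k : ℕ} (a : Fin k → A) : Prop :=
  (NonUnitalStarAlgebra.adjoin ℂ (Set.range a)).topologicalClosure = ⊤

/-- The kernel of a unital star algebra homomorphism, as a non-unital star subalgebra. -/
def starAlgHomKer {A B : Type*} [CStarAlgebra A] [CStarAlgebra B] (π : A →⋆ₐ[ℂ] B) :
    NonUnitalStarSubalgebra ℂ A where
  carrier := {a : A | π a = 0}
  add_mem' := by intro a b ha hb; simp only [Set.mem_setOf_eq, map_add] at *; rw [ha, hb, add_zero]
  zero_mem' := by simp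
  mul_mem' := by intro a b ha hb; simp only [Set.mem_setOf_eq, map_mul] at *; rw [ha, zero_mul]
  smul_mem' := by intro c a ha; simp only [Set.mem_setOf_eq, map_smul] at *; rw [ha, smul_zero]
  star_mem' := by intro a ha; simp only [Set.mem_setOf_eq, map_star] at *; rw [ha, star_zero]

lemma starAlgHomKer_isClosed {A B : Type*} [CStarAlgebra A] [CStarAlgebra B]
    (π : A →⋆ₐ[ℂ] B) : IsClosed ((starAlgHomKer π : Set A)) :=
  isClosed_singleton.preimage (map_continuous π)

open scoped ComplexStarModule

section Helpers

variable {A B : Type*} [CStarAlgebra A] [CStarAlgebra B]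

lemma GrExt.realPart_eq_self {a : A} (ha : IsSelfAdjoint a) : (ℜ a : A) = a := by
  rw [realPart_apply_coe, ha.star_eq, ← two_smul ℝ a, smul_smul]
  norm_num

lemma GrExt.map_realPart (π : A →⋆ₐ[ℂ] B) (a : A) : π (ℜ a : A) = (ℜ (π a) : B) := by
  rw [realPart_apply_coe, realPart_apply_coe, ← algebraMap_smul ℂ ((2:ℝ)⁻¹) (a + star a),
    map_smul, algebraMap_smul, map_add, map_star]

lemma GrExt.norm_realPart_le (a : A) : ‖(ℜ a : A)‖ ≤ ‖a‖ := by
  rw [realPart_apply_coe]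
  calc ‖(2:ℝ)⁻¹ • (a + star a)‖ = (2:ℝ)⁻¹ * ‖a + star a‖ := by rw [norm_smul]; norm_num
    _ ≤ (2:ℝ)⁻¹ * (‖a‖ + ‖star a‖) := by gcongr; exact norm_add_le _ _
    _ = ‖a‖ := by rw [norm_star]; ring

lemma GrExt.realPart_mem {S : NonUnitalStarSubalgebra ℂ A} {a : A} (ha : a ∈ S) :
    (ℜ a : A) ∈ S := by
  rw [realPart_apply_coe, ← algebraMap_smul ℂ ((2:ℝ)⁻¹) (a + star a)]
  exact SMulMemClass.smul_mem _ (add_mem ha (star_mem ha))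

/-- Norm-controlled correction: a self-adjoint element may be modified to one with the same
image under `π` and norm bounded by any bound for `‖π v‖`, by clipping its spectrum. -/
lemma GrExt.clip (π : A →⋆ₐ[ℂ] B) (v : A) (hv : IsSelfAdjoint v) {r : ℝ} (hr : 0 ≤ r)
    (h : ‖π v‖ ≤ r) : ∃ w : A, IsSelfAdjoint w ∧ π w = π v ∧ ‖w‖ ≤ r := by
  by_cases hB : Subsingleton B
  · exact ⟨0, IsSelfAdjoint.zero A, Subsingleton.elim _ _, by simpa using hr⟩
  have : Nontrivial B := not_subsingleton_iff_nontrivial.mp hB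
  set f : ℝ → ℝ := fun t => max (-r) (min t r) with hf
  have hfc : Continuous f := by fun_prop
  have hπv : IsSelfAdjoint (π v) := hv.map π
  refine ⟨cfc f v, cfc_predicate f v, ?_, ?_⟩
  · rw [StarAlgHom.map_cfc π f v (hf := hfc.continuousOn) (hφ := map_continuous π)]
    conv_rhs => rw [← cfc_id ℝ (π v)]
    apply cfc_congr
    intro t ht
    have h1 : ‖t‖ ≤ ‖π v‖ := spectrum.norm_le_norm_of_mem ht
    simp only [Real.norm_eq_abs, abs_le] at h1
    simp only [hf, id]
    rw [min_eq_left (h1.2.trans h), max_eq_right (by linarith [h1.1])]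
  · refine norm_cfc_le hr fun x hx => ?_
    simp only [hf, Real.norm_eq_abs, abs_le]
    exact ⟨neg_le.mpr (neg_le.mp (neg_neg r ▸ le_max_left (-r) (min x r))),
      max_le (by linarith) (min_le_right _ _)⟩

/-- Norm-preserving self-adjoint lift along a surjective star homomorphism. -/
lemma GrExt.sa_lift (π : A →⋆ₐ[ℂ] B) (hπ : Function.Surjective π) (b : B)
    (hb : IsSelfAdjoint b) : ∃ w : A, IsSelfAdjoint w ∧ π w = b ∧ ‖w‖ ≤ ‖b‖ := by
  obtain ⟨v0, hv0⟩ := hπ b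
  have h1 : π (ℜ v0 : A) = b := by
    rw [GrExt.map_realPart, hv0, GrExt.realPart_eq_self hb]
  obtain ⟨w, hw1, hw2, hw3⟩ := GrExt.clip π (ℜ v0 : A) (ℜ v0).prop (norm_nonneg b)
    (by rw [h1])
  exact ⟨w, hw1, hw2.trans h1, hw3⟩

/-- Approximate a self-adjoint element in the closure of a star subalgebra by a self-adjoint
element of the subalgebra. -/
lemma GrExt.approx_sa {S : NonUnitalStarSubalgebra ℂ B} {x : B} (hx : IsSelfAdjoint x)
    (hxc : x ∈ closure (S : Set B)) {ε : ℝ} (hε : 0 < ε) :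
    ∃ q ∈ S, IsSelfAdjoint q ∧ ‖x - q‖ < ε := by
  obtain ⟨q0, hq0, hq0d⟩ := Metric.mem_closure_iff.mp hxc ε hε
  refine ⟨(ℜ q0 : B), GrExt.realPart_mem hq0, (ℜ q0).prop, ?_⟩
  have h1 : x - (ℜ q0 : B) = (ℜ (x - q0) : B) := by
    rw [map_sub, AddSubgroup.coe_sub, GrExt.realPart_eq_self hx]
  calc ‖x - (ℜ q0 : B)‖ = ‖(ℜ (x - q0) : B)‖ := by rw [h1]
    _ ≤ ‖x - q0‖ := GrExt.norm_realPart_le _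
    _ < ε := by rwa [dist_eq_norm] at hq0d

end Helpers

section UnitizationHelpers

variable {J : Type*} [NonUnitalCStarAlgebra J]

lemma GrExt.fst_norm_le (x : Unitization ℂ J) : ‖x.fst‖ ≤ ‖x‖ := by
  rw [Unitization.norm_eq_sup]; exact le_sup_left

lemma GrExt.norm_inl_le (c : ℂ) : ‖(Unitization.inl c : Unitization ℂ J)‖ ≤ ‖c‖ := by
  rw [Unitization.norm_eq_sup]
  simp only [Unitization.fst_inl, Unitization.snd_inl, map_zero, add_zero]
  refine sup_le le_rfl ?_
  rw [Algebra.algebraMap_eq_smul_one, norm_smul]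
  calc ‖c‖ * ‖(1 : J →L[ℂ] J)‖ ≤ ‖c‖ * 1 := by gcongr; exact ContinuousLinearMap.norm_id_le
    _ = ‖c‖ := mul_one _

lemma GrExt.snd_norm_le (x : Unitization ℂ J) : ‖x.snd‖ ≤ 2 * ‖x‖ := by
  have h1 : (x.snd : Unitization ℂ J) = x - Unitization.inl x.fst := by
    rw [eq_sub_iff_add_eq, add_comm]
    exact Unitization.inl_fst_add_inr_snd_eq x
  rw [show ‖x.snd‖ = ‖(x.snd : Unitization ℂ J)‖ from (Unitization.norm_inr x.snd).symm, h1]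
  calc ‖x - Unitization.inl x.fst‖ ≤ ‖x‖ + ‖(Unitization.inl x.fst : Unitization ℂ J)‖ :=
        norm_sub_le _ _
    _ ≤ ‖x‖ + ‖x.fst‖ := by gcongr; exact GrExt.norm_inl_le _
    _ ≤ ‖x‖ + ‖x‖ := by gcongr; exact GrExt.fst_norm_le _
    _ = 2 * ‖x‖ := by ring

lemma GrExt.continuous_snd : Continuous (fun x : Unitization ℂ J => x.snd) :=
  Unitization.uniformEquivProd.continuous.snd

end UnitizationHelpers

/-- If a tuple generates the unitization of the kernel, and all the `J`-components of its
entries lie in a closed star subalgebra `E` of `A`, then all of the kernel lies in `E`. -/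
lemma GrExt.ker_subset {A B : Type*} [CStarAlgebra A] [CStarAlgebra B] (π : A →⋆ₐ[ℂ] B)
    [inst : IsClosed ((starAlgHomKer π : Set A))] (E : NonUnitalStarSubalgebra ℂ A)
    (hE : IsClosed (E : Set A)) {k : ℕ} (g : Fin k → Unitization ℂ (starAlgHomKer π))
    (hgen : Generates g) (hsnd : ∀ i, (((g i).snd : A)) ∈ E) :
    ∀ z : starAlgHomKer π, (z : A) ∈ E := by
  set W : NonUnitalStarSubalgebra ℂ (Unitization ℂ (starAlgHomKer π)) :=
    { carrier := {z : Unitization ℂ (starAlgHomKer π) | ((z.snd : A)) ∈ E}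
      add_mem' := by
        intro x y hx hy
        simp only [Set.mem_setOf_eq, Unitization.snd_add] at *
        push_cast
        exact add_mem hx hy
      zero_mem' := by simpa using zero_mem E
      mul_mem' := by
        intro x y hx hy
        simp only [Set.mem_setOf_eq, Unitization.snd_mul] at *
        push_cast
        exact add_mem (add_mem (SMulMemClass.smul_mem _ hy) (SMulMemClass.smul_mem _ hx))
          (mul_mem hx hy)
      smul_mem' := by
        intro c x hx
        simp only [Set.mem_setOf_eq, Unitization.snd_smul] at *
        push_cast
        exact SMulMemClass.smul_mem _ hx
      star_mem' := by
        intro x hx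
        simp only [Set.mem_setOf_eq, Unitization.snd_star] at *
        push_cast
        exact star_mem hx } with hW
  have hWclosed : IsClosed (W : Set (Unitization ℂ (starAlgHomKer π))) := by
    have : (W : Set (Unitization ℂ (starAlgHomKer π))) =
        (fun z : Unitization ℂ (starAlgHomKer π) => ((z.snd : A))) ⁻¹' (E : Set A) := rfl
    rw [this]
    exact hE.preimage (continuous_subtype_val.comp GrExt.continuous_snd)
  have hadj : NonUnitalStarAlgebra.adjoin ℂ (Set.range g) ≤ W := by
    rw [NonUnitalStarAlgebra.adjoin_le_iff]
    rintro _ ⟨i, rfl⟩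
    exact hsnd i
  have hle : (NonUnitalStarAlgebra.adjoin ℂ (Set.range g)).topologicalClosure ≤ W :=
    NonUnitalStarSubalgebra.topologicalClosure_minimal _ hadj hWclosed
  have hgen' : (NonUnitalStarAlgebra.adjoin ℂ (Set.range g)).topologicalClosure = ⊤ := hgen
  rw [hgen'] at hle
  intro z
  have hz : ((z : Unitization ℂ (starAlgHomKer π))) ∈ W := hle (by trivial)
  have : (((z : Unitization ℂ (starAlgHomKer π)).snd : A)) ∈ E := hz
  rwa [Unitization.snd_inr] at this

/-- Given a surjective unital *-homomorphism `π : A → B` with kernel `J`, if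
`Gen_k(J̃)_sa` is dense in `J̃^k_sa` and `Gen_l(B)_sa` is dense in `B^l_sa`, then
`Gen_{k+l}(A)_sa` is dense in `A^{k+l}_sa`. In other words,
`gr(A) ≤ gr(J) + gr(A/J) + 1`. -/
theorem gr_extension {A B : Type*} [CStarAlgebra A] [CStarAlgebra B]
    (π : A →⋆ₐ[ℂ] B) (hπ : Function.Surjective π) {k l : ℕ} (hk : 1 ≤ k) (hl : 1 ≤ l) :
    haveI : IsClosed ((starAlgHomKer π : Set A)) := starAlgHomKer_isClosed π
    (∀ a : Fin k → Unitization ℂ (starAlgHomKer π), (∀ i, IsSelfAdjoint (a i)) →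
      a ∈ closure {b : Fin k → Unitization ℂ (starAlgHomKer π) |
        (∀ i, IsSelfAdjoint (b i)) ∧ Generates b}) →
    (∀ a : Fin l → B, (∀ i, IsSelfAdjoint (a i)) →
      a ∈ closure {b : Fin l → B | (∀ i, IsSelfAdjoint (b i)) ∧ Generates b}) →
    (∀ a : Fin (k + l) → A, (∀ i, IsSelfAdjoint (a i)) →
      a ∈ closure {b : Fin (k + l) → A | (∀ i, IsSelfAdjoint (b i)) ∧ Generates b}) := by
  haveI : IsClosed ((starAlgHomKer π : Set A)) := starAlgHomKer_isClosed π
  intro hJ hB a ha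
  rw [Metric.mem_closure_iff]
  intro ε hε
  have hε1 : 0 < ε / 4 := by linarith
  -- Step 1: approximate the image of the last l entries by a generating tuple of B
  have hBsa : ∀ j : Fin l, IsSelfAdjoint (π (a (Fin.natAdd k j))) := fun j => (ha _).map π
  obtain ⟨c, ⟨hcsa, hcgen⟩, hcd⟩ :=
    Metric.mem_closure_iff.mp (hB (fun j => π (a (Fin.natAdd k j))) hBsa) _ hε1
  have hcj : ∀ j, ‖c j - π (a (Fin.natAdd k j))‖ < ε / 4 := by
    intro j
    rw [← dist_eq_norm, dist_comm]
    exact lt_of_le_of_lt (dist_le_pi_dist (fun j => π (a (Fin.natAdd k j))) c j) hcd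
  -- Step 2: lift to self-adjoint elements close to the last l entries of a
  have hlift : ∀ j, ∃ w : A, IsSelfAdjoint w ∧ π w = c j - π (a (Fin.natAdd k j)) ∧
      ‖w‖ ≤ ‖c j - π (a (Fin.natAdd k j))‖ :=
    fun j => GrExt.sa_lift π hπ _ ((hcsa j).sub (hBsa j))
  choose w hwsa hwπ hwn using hlift
  set at' : Fin l → A := fun j => a (Fin.natAdd k j) + w j with hat'
  have hat'sa : ∀ j, IsSelfAdjoint (at' j) := fun j => (ha _).add (hwsa j)
  have hat'π : ∀ j, π (at' j) = c j := by
    intro j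
    simp only [hat', map_add, hwπ j]
    abel
  have hat'n : ∀ j, ‖at' j - a (Fin.natAdd k j)‖ < ε / 4 := by
    intro j
    simpa [hat'] using lt_of_le_of_lt (hwn j) (hcj j)
  have hrange : Set.range c = ⇑π '' Set.range at' := by
    rw [show c = ⇑π ∘ at' from funext fun j => (hat'π j).symm, Set.range_comp]
  have hBclos : ∀ b' : B, b' ∈ closure
      ((NonUnitalStarAlgebra.adjoin ℂ (Set.range c) : NonUnitalStarSubalgebra ℂ B) : Set B) := by
    intro b'
    have h1 : b' ∈ (NonUnitalStarAlgebra.adjoin ℂ (Set.range c)).topologicalClosure := by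
      rw [show (NonUnitalStarAlgebra.adjoin ℂ (Set.range c)).topologicalClosure = ⊤ from hcgen]
      trivial
    exact h1
  -- Approximation of images by self-adjoint elements of the subalgebra generated by at'
  have hstep3 : ∀ v : A, IsSelfAdjoint v → ∀ δ : ℝ, 0 < δ →
      ∃ p ∈ NonUnitalStarAlgebra.adjoin ℂ (Set.range at'),
        IsSelfAdjoint p ∧ ‖π v - π p‖ < δ := by
    intro v hv δ hδ
    obtain ⟨q, hq, hqsa, hqn⟩ := GrExt.approx_sa (hv.map π) (hBclos (π v)) hδ
    rw [hrange, ← NonUnitalStarAlgHom.map_adjoin (R := ℂ) π _] at hq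
    obtain ⟨p0, hp0, hp0q⟩ := NonUnitalStarSubalgebra.mem_map.mp hq
    refine ⟨(ℜ p0 : A), GrExt.realPart_mem hp0, (ℜ p0).prop, ?_⟩
    rwa [GrExt.map_realPart, hp0q, GrExt.realPart_eq_self hqsa]
  -- Step 3/4: decompose the first k entries
  have hstep4 : ∀ i : Fin k, ∃ d w' : A, d ∈ NonUnitalStarAlgebra.adjoin ℂ (Set.range at') ∧
      IsSelfAdjoint d ∧ IsSelfAdjoint w' ∧ ‖w'‖ ≤ ε / 4 ∧
      π (a (Fin.castAdd l i) - d - w') = 0 := by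
    intro i
    obtain ⟨d, hdadj, hdsa, hdn⟩ := hstep3 (a (Fin.castAdd l i)) (ha _) (ε / 4) hε1
    obtain ⟨w', hw'sa, hw'π, hw'n⟩ := GrExt.clip π (a (Fin.castAdd l i) - d)
      ((ha _).sub hdsa) (le_of_lt hε1) (by rw [map_sub]; exact le_of_lt hdn)
    exact ⟨d, w', hdadj, hdsa, hw'sa, hw'n, by rw [map_sub, hw'π, sub_self]⟩
  choose d w' hdadj hdsa hw'sa hw'n hker using hstep4
  set xk : Fin k → (starAlgHomKer π) := fun i => ⟨a (Fin.castAdd l i) - d i - w' i, hker i⟩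
    with hxk
  have hxksa : ∀ i, IsSelfAdjoint (xk i) :=
    fun i => Subtype.ext (((ha _).sub (hdsa i)).sub (hw'sa i)).star_eq
  set Xt : Fin k → Unitization ℂ (starAlgHomKer π) := fun i => (xk i : Unitization ℂ _)
    with hXt
  have hXtsa : ∀ i, IsSelfAdjoint (Xt i) := by
    intro i
    rw [IsSelfAdjoint, hXt]
    simp only
    rw [← Unitization.inr_star, (hxksa i).star_eq]
  obtain ⟨g, ⟨hgsa, hggen⟩, hgd⟩ := Metric.mem_closure_iff.mp (hJ Xt hXtsa) _ hε1
  have hgj : ∀ i, ‖g i - Xt i‖ < ε / 4 := by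
    intro i
    rw [← dist_eq_norm, dist_comm]
    exact lt_of_le_of_lt (dist_le_pi_dist _ g i) hgd
  set y : Fin k → A := fun i => ((g i).snd : A) with hy
  have hysnd : ∀ i, IsSelfAdjoint ((g i).snd) := by
    intro i
    have : (star (g i)).snd = (g i).snd :=
      congrArg (fun x : Unitization ℂ (starAlgHomKer π) => x.snd) (hgsa i).star_eq
    rwa [Unitization.snd_star] at this
  have hysa : ∀ i, IsSelfAdjoint (y i) := fun i => congrArg Subtype.val (hysnd i).star_eq
  have hynear : ∀ i, ‖y i - (xk i : A)‖ < 2 * (ε / 4) := by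
    intro i
    have h1 : (g i - Xt i).snd = (g i).snd - xk i := by
      rw [show (g i - Xt i).snd = (g i).snd - (Xt i).snd from
        map_sub (Unitization.sndHom ℂ ℂ _) _ _, hXt]
      simp [Unitization.snd_inr]
    have h2 : ‖(g i - Xt i).snd‖ ≤ 2 * ‖g i - Xt i‖ := GrExt.snd_norm_le _
    rw [h1] at h2
    have h3 : ‖((g i).snd - xk i : starAlgHomKer π)‖ = ‖y i - (xk i : A)‖ := rfl
    rw [h3] at h2
    calc ‖y i - (xk i : A)‖ ≤ 2 * ‖g i - Xt i‖ := h2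
      _ < 2 * (ε / 4) := by have := hgj i; linarith
  -- the candidate tuple
  set b : Fin (k + l) → A :=
    Fin.addCases (motive := fun _ => A) (fun i => d i + y i) at' with hb
  have hbleft : ∀ i, b (Fin.castAdd l i) = d i + y i := fun i => Fin.addCases_left i
  have hbright : ∀ j, b (Fin.natAdd k j) = at' j := fun j => Fin.addCases_right j
  have hbsa : ∀ m, IsSelfAdjoint (b m) := by
    intro m
    refine Fin.addCases (motive := fun m => IsSelfAdjoint (b m)) (fun i => ?_) (fun j => ?_) m
    · show IsSelfAdjoint (b (Fin.castAdd l i))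
      rw [hbleft]; exact (hdsa i).add (hysa i)
    · show IsSelfAdjoint (b (Fin.natAdd k j))
      rw [hbright]; exact hat'sa j
  -- generation
  have hbgen : Generates b := by
    set E := (NonUnitalStarAlgebra.adjoin ℂ (Set.range b)).topologicalClosure with hE
    have hEclosed : IsClosed (E : Set A) :=
      NonUnitalStarSubalgebra.isClosed_topologicalClosure _
    have hmemb : ∀ m, b m ∈ E := fun m =>
      NonUnitalStarSubalgebra.le_topologicalClosure _
        (NonUnitalStarAlgebra.subset_adjoin ℂ _ (Set.mem_range_self m))
    have hatE : ∀ j, at' j ∈ E := fun j => by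
      rw [← hbright j]; exact hmemb _
    have hDle : NonUnitalStarAlgebra.adjoin ℂ (Set.range at') ≤ E :=
      NonUnitalStarAlgebra.adjoin_le_iff.mpr (by rintro _ ⟨j, rfl⟩; exact hatE j)
    have hdE : ∀ i, d i ∈ E := fun i => hDle (hdadj i)
    have hyE : ∀ i, y i ∈ E := by
      intro i
      have h1 : d i + y i ∈ E := by rw [← hbleft i]; exact hmemb _
      have := sub_mem h1 (hdE i)
      rwa [add_sub_cancel_left] at this
    have hJE : ∀ z : starAlgHomKer π, (z : A) ∈ E :=
      GrExt.ker_subset π E hEclosed g hggen (fun i => hyE i)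
    have hsaE : ∀ v : A, IsSelfAdjoint v → v ∈ E := by
      intro v hv
      have hcl : v ∈ closure (E : Set A) := by
        rw [Metric.mem_closure_iff]
        intro δ hδ
        have hδ2 : 0 < δ / 2 := by linarith
        obtain ⟨p, hpadj, hpsa, hpn⟩ := hstep3 v hv (δ / 2) hδ2
        obtain ⟨w2, hw2sa, hw2π, hw2n⟩ := GrExt.clip π (v - p) (hv.sub hpsa)
          (le_of_lt hδ2) (by rw [map_sub]; exact le_of_lt hpn)
        have hker2 : π (v - p - w2) = 0 := by rw [map_sub, hw2π, sub_self]
        have hxE : (v - p - w2) ∈ E := hJE ⟨v - p - w2, hker2⟩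
        refine ⟨p + (v - p - w2), add_mem (hDle hpadj) hxE, ?_⟩
        rw [dist_eq_norm, show v - (p + (v - p - w2)) = w2 by abel]
        linarith
      rwa [hEclosed.closure_eq] at hcl
    show (NonUnitalStarAlgebra.adjoin ℂ (Set.range b)).topologicalClosure = ⊤
    rw [← hE, eq_top_iff]
    rintro z -
    rw [← realPart_add_I_smul_imaginaryPart z]
    exact add_mem (hsaE _ (ℜ z).prop) (SMulMemClass.smul_mem _ (hsaE _ (ℑ z).prop))
  -- distance
  refine ⟨b, ⟨hbsa, hbgen⟩, ?_⟩
  rw [dist_pi_lt_iff hε]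
  intro m
  refine Fin.addCases (motive := fun m => dist (a m) (b m) < ε) (fun i => ?_) (fun j => ?_) m
  · show dist (a (Fin.castAdd l i)) (b (Fin.castAdd l i)) < ε
    rw [hbleft, dist_eq_norm]
    have hxkv : (xk i : A) = a (Fin.castAdd l i) - d i - w' i := rfl
    have h1 : a (Fin.castAdd l i) - (d i + y i) = ((xk i : A) - y i) + w' i := by
      rw [hxkv]; abel
    rw [h1]
    calc ‖((xk i : A) - y i) + w' i‖ ≤ ‖(xk i : A) - y i‖ + ‖w' i‖ := norm_add_le _ _
      _ < 2 * (ε / 4) + ε / 4 := by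
          have h2 := hynear i
          rw [norm_sub_rev] at h2
          have := hw'n i
          linarith
      _ < ε := by linarith
  · show dist (a (Fin.natAdd k j)) (b (Fin.natAdd k j)) < ε
    rw [hbright, dist_eq_norm, norm_sub_rev]
    calc ‖at' j - a (Fin.natAdd k j)‖ < ε / 4 := hat'n j
      _ < ε := by linarith
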